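/- Let A = U|A| be the polar decomposition of a quasinormal bounded operator A (U a partial isometry), and let B be a bounded operator such that BU is quasinormal and |A|BU = BU|A|. Then BA is quasinormal. -/

import Mathlib

open ContinuousLinearMap
open scoped InnerProductSpace

variable {H : Type*} [NormedAddCommGroup H] [InnerProductSpace ℂ H] [CompleteSpace H]

private lemma aux_monoid {M : Type*} [Monoid M] (T S P : M)
    (h1 : Commute P T) (h2 : Commute P S)
    (h3 : T * (S * T) = (S * T) * T) :
    (T * P) * ((P * S) * (T * P)) = ((P * S) * (T * P)) * (T * P) := by
  have key : ∀ X, T * (S * (T * X)) = S * (T * (T * X)) := by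
    intro X
    calc T * (S * (T * X)) = (T * (S * T)) * X := by simp only [mul_assoc]
      _ = ((S * T) * T) * X := by rw [h3]
      _ = S * (T * (T * X)) := by simp only [mul_assoc]
  have lhs : (T * P) * ((P * S) * (T * P)) = T * (S * (T * (P * (P * P)))) := by
    simp only [mul_assoc]
    rw [h2.left_comm, h1.left_comm, h2.left_comm, h1.left_comm]
  have rhs : ((P * S) * (T * P)) * (T * P) = S * (T * (T * (P * (P * P)))) := by
    simp only [mul_assoc]
    rw [h1.left_comm, h2.left_comm, h1.left_comm, h1.left_comm]
  rw [lhs, rhs, key]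

/-- A quasinormal with polar decomposition A = U|A| (U a partial isometry),
BU quasinormal and |A|BU = BU|A| ⟹ BA quasinormal. -/
theorem stmt9 (A B U P : H →L[ℂ] H)
    (hP : 0 ≤ P) (hP2 : P * P = adjoint A * A) (hpolar : A = U * P)
    (hUiso : ∀ x ∈ (LinearMap.ker (U : H →ₗ[ℂ] H))ᗮ, ‖U x‖ = ‖x‖)
    (hUker : LinearMap.ker (U : H →ₗ[ℂ] H) = LinearMap.ker (A : H →ₗ[ℂ] H))
    (hA : A * (adjoint A * A) = (adjoint A * A) * A)
    (hBU : (B * U) * (adjoint (B * U) * (B * U)) = (adjoint (B * U) * (B * U)) * (B * U))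
    (hcomm : P * (B * U) = (B * U) * P) :
    (B * A) * (adjoint (B * A) * (B * A)) = (adjoint (B * A) * (B * A)) * (B * A) := by
  have hPsa : adjoint P = P := hP.isSelfAdjoint
  set T := B * U with hT
  have hmul : ∀ X Y : H →L[ℂ] H, adjoint (X * Y) = adjoint Y * adjoint X := by
    intro X Y
    simp only [← ContinuousLinearMap.star_eq_adjoint, star_mul]
  have hc2 : Commute P (adjoint T) := by
    have := congrArg adjoint hcomm
    rw [hmul P T, hmul T P, hPsa] at this
    exact this.symm
  have hBA : B * A = T * P := by rw [hpolar, hT, mul_assoc]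
  have hadj : adjoint (B * A) = P * adjoint T := by
    rw [hBA, hmul, hPsa]
  rw [hadj, hBA]
  exact aux_monoid T (adjoint T) P hcomm hc2 hBU
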